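/- arXiv:1908.02529 — 8 statements merged into one kernel-verified Lean document; each statement's English description precedes it below -/
import Mathlib

section
/- Let u : ℝ → ℝ be a Bohr almost periodic function (i.e., for every ε > 0 the set of ε-almost-periods of u is relatively dense in ℝ). If the sequences of translates (u_{τ_n})_{n∈ℕ} and (u_{s_n})_{n∈ℕ}, where u_τ(t) = u(t+τ), both converge uniformly on ℝ, then the sequence (u_{τ_n - s_n})_{n∈ℕ} also converges uniformly on ℝ. -/
open Filter

/-- If `u` is Bohr almost periodic and the translate sequences `u (· + τ n)` and
`u (· + s n)` converge uniformly on `ℝ`, then so does `u (· + (τ n - s n))`. -/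
theorem stmt_0 (u : ℝ → ℝ) (hu : Continuous u)
    (hap : ∀ ε > 0, ∃ L > 0, ∀ x : ℝ, ∃ T ∈ Set.Icc x (x + L),
      ∀ t : ℝ, |u (t + T) - u t| < ε)
    (τ s : ℕ → ℝ) (f g : ℝ → ℝ)
    (hf : TendstoUniformly (fun n t => u (t + τ n)) f atTop)
    (hg : TendstoUniformly (fun n t => u (t + s n)) g atTop) :
    ∃ h : ℝ → ℝ, TendstoUniformly (fun n t => u (t + (τ n - s n))) h atTop := by
  -- The sequence F n t = u (t + (τ n - s n)) is uniformly Cauchy.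
  have key : ∀ ε > (0:ℝ), ∃ N : ℕ, ∀ m ≥ N, ∀ n ≥ N, ∀ t : ℝ,
      dist (u (t + (τ m - s m))) (u (t + (τ n - s n))) < ε := by
    intro ε hε
    obtain ⟨N₁, hN₁⟩ := eventually_atTop.1
      (Metric.tendstoUniformly_iff.1 hf (ε/4) (by linarith))
    obtain ⟨N₂, hN₂⟩ := eventually_atTop.1
      (Metric.tendstoUniformly_iff.1 hg (ε/4) (by linarith))
    refine ⟨max N₁ N₂, fun m hm n hn t => ?_⟩
    have hm1 : m ≥ N₁ := le_trans (le_max_left _ _) hm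
    have hm2 : m ≥ N₂ := le_trans (le_max_right _ _) hm
    have hn1 : n ≥ N₁ := le_trans (le_max_left _ _) hn
    have hn2 : n ≥ N₂ := le_trans (le_max_right _ _) hn
    -- With x = t - s m, u (t + (τ m - s m)) = u (x + τ m)
    set x := t - s m with hx
    have e1 : u (t + (τ m - s m)) = u (x + τ m) := by rw [hx]; congr 1; ring
    have e2 : u (t + (τ n - s n)) = u ((x + τ n) + (s m - s n)) := by rw [hx]; congr 1; ring
    rw [e1, e2]
    -- dist (u (x + τ m)) (u (x + τ n)) < ε/2 via hf-Cauchy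
    have h1 : dist (u (x + τ m)) (u (x + τ n)) < ε/2 := by
      calc dist (u (x + τ m)) (u (x + τ n))
          ≤ dist (u (x + τ m)) (f x) + dist (f x) (u (x + τ n)) := dist_triangle _ _ _
        _ < ε/4 + ε/4 := by
            have := hN₁ m hm1 x
            have := hN₁ n hn1 x
            rw [dist_comm] at *
            gcongr <;> [exact (dist_comm (f x) (u (x + τ m)) ▸ hN₁ m hm1 x);
              exact hN₁ n hn1 x]
        _ = ε/2 := by ring
    -- dist (u y) (u (y + (s m - s n))) < ε/2 for y = x + τ n
    have h2 : dist (u (x + τ n)) (u ((x + τ n) + (s m - s n))) < ε/2 := by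
      set y := x + τ n - s n with hy
      have e3 : x + τ n = y + s n := by ring
      have e4 : (x + τ n) + (s m - s n) = y + s m := by ring
      rw [e4, e3]
      calc dist (u (y + s n)) (u (y + s m))
          ≤ dist (u (y + s n)) (g y) + dist (g y) (u (y + s m)) := dist_triangle _ _ _
        _ < ε/4 + ε/4 := by
            gcongr
            · exact dist_comm (g y) (u (y + s n)) ▸ hN₂ n hn2 y
            · exact hN₂ m hm2 y
        _ = ε/2 := by ring
    calc dist (u (x + τ m)) (u ((x + τ n) + (s m - s n)))
        ≤ dist (u (x + τ m)) (u (x + τ n)) +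
          dist (u (x + τ n)) (u ((x + τ n) + (s m - s n))) := dist_triangle _ _ _
      _ < ε/2 + ε/2 := add_lt_add h1 h2
      _ = ε := by ring
  -- uniform Cauchy ⇒ pointwise Cauchy ⇒ pointwise limit h; then uniform convergence.
  have hcauchy : UniformCauchySeqOn (fun n t => u (t + (τ n - s n))) atTop Set.univ := by
    rw [Metric.uniformCauchySeqOn_iff]
    intro ε hε
    obtain ⟨N, hN⟩ := key ε hε
    exact ⟨N, fun m hm n hn t _ => hN m hm n hn t⟩
  have hpt : ∀ t : ℝ, ∃ l : ℝ, Tendsto (fun n => u (t + (τ n - s n))) atTop (nhds l) := by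
    intro t
    apply cauchySeq_tendsto_of_complete
    rw [Metric.cauchySeq_iff]
    intro ε hε
    obtain ⟨N, hN⟩ := key ε hε
    exact ⟨N, fun m hm n hn => hN m hm n hn t⟩
  choose h hh using hpt
  refine ⟨h, tendstoUniformlyOn_univ.1 ?_⟩
  exact hcauchy.tendstoUniformlyOn_of_tendsto fun t _ => hh t
end

section
/- Let Ω be a compact metrizable commutative topological group, ψ : ℝ → Ω a continuous homomorphism with dense image, φ a nontrivial character of Ω with φ(ψ(t)) = e^{iαt}, Σ = ker φ, and S = 2π/|α|. Then the restricted flow Φ : Σ × [0,S) → Ω, Φ(σ,t) = σ + ψ(t), is a continuous bijection, and its restriction to Σ × (0,S) is a homeomorphism onto Ω \ Σ. -/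
open Complex Real


theorem exp_unique (α : ℝ) (hα : 0 < α) {s t : ℝ} (hst : |s - t| < 2 * π / α)
    (h : Complex.exp (Complex.I * α * s) = Complex.exp (Complex.I * α * t)) : s = t := by
  have h1 : Complex.exp (Complex.I * α * s - Complex.I * α * t) = 1 := by
    rw [Complex.exp_sub, h, div_self (Complex.exp_ne_zero _)]
  rw [Complex.exp_eq_one_iff] at h1
  obtain ⟨n, hn⟩ := h1
  have him : α * (s - t) = n * (2 * π) := by
    have := congrArg Complex.im hn
    simpa [mul_sub, mul_comm] using this
  have hn0 : n = 0 := by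
    by_contra h0
    have h1le : (1 : ℝ) ≤ |(n : ℝ)| := by
      exact_mod_cast Int.one_le_abs (by exact_mod_cast h0)
    have : α * |s - t| < α * (2 * π / α) := mul_lt_mul_of_pos_left hst hα
    rw [mul_div_cancel₀ _ hα.ne'] at this
    have habs : |α * (s - t)| = |(n : ℝ)| * (2 * π) := by
      rw [him, abs_mul, abs_of_pos (by positivity : (0:ℝ) < 2 * π)]
    rw [abs_mul, abs_of_pos hα] at habs
    nlinarith [Real.pi_pos]
  rw [hn0] at him
  simp at him
  rcases him with h | h
  · exact False.elim (hα.ne' h)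
  · linarith

theorem arg_aux (z : ℂ) (hz : ‖z‖ = 1) (h1 : z ≠ 1) :
    0 < π + (-z).arg ∧ π + (-z).arg < 2 * π ∧
      Complex.exp (Complex.I * (↑(π + (-z).arg) : ℂ)) = z := by
  have hne : (-z).arg ≠ π := by
    intro h
    rw [Complex.arg_eq_pi_iff] at h
    obtain ⟨hre, him⟩ := h
    simp only [Complex.neg_re, Complex.neg_im, neg_lt_zero, neg_eq_zero] at hre him
    apply h1
    have : z = (z.re : ℂ) := Complex.ext rfl (by simp [him])
    rw [this] at hz ⊢
    rw [Complex.norm_real, Real.norm_eq_abs, _root_.abs_of_pos hre] at hz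
    rw [hz]; norm_num
  have hIoc := Complex.arg_mem_Ioc (-z)
  refine ⟨by linarith [hIoc.1], by have := lt_of_le_of_ne hIoc.2 hne; linarith, ?_⟩
  have habs : ‖-z‖ = 1 := by rwa [norm_neg]
  have key : Complex.exp ((-z).arg * Complex.I) = -z := by
    have := Complex.norm_mul_exp_arg_mul_I (-z)
    rwa [habs, Complex.ofReal_one, one_mul] at this
  have : Complex.exp (Complex.I * (↑(π + (-z).arg) : ℂ)) =
      Complex.exp (π * Complex.I) * Complex.exp ((-z).arg * Complex.I) := by
    rw [← Complex.exp_add]; push_cast; ring_nf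
  rw [this, Complex.exp_pi_mul_I, key]; ring

theorem slit_aux (z : ℂ) (hz : ‖z‖ = 1) (h1 : z ≠ 1) :
    (-z) ∈ Complex.slitPlane := by
  rw [Complex.mem_slitPlane_iff]
  by_contra h
  push_neg at h
  obtain ⟨hre, him⟩ := h
  simp only [Complex.neg_re, Complex.neg_im, neg_eq_zero] at hre him
  apply h1
  have hz' : z = (z.re : ℂ) := Complex.ext rfl (by simp [him])
  have hzre : 0 ≤ z.re := by linarith [hre]
  rw [hz'] at hz ⊢
  rw [Complex.norm_real, Real.norm_eq_abs, _root_.abs_of_nonneg hzre] at hz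
  rw [hz]; norm_num

theorem stmt_4_main {Ω : Type*} [AddCommGroup Ω] [TopologicalSpace Ω] [IsTopologicalAddGroup Ω]
    (ψ : ℝ →+ Ω) (hψ : Continuous ψ)
    (φ : Ω → ℂ) (hφc : Continuous φ)
    (hφabs : ∀ ω : Ω, ‖φ ω‖ = 1)
    (hφhom : ∀ ω ω' : Ω, φ (ω + ω') = φ ω * φ ω')
    (α : ℝ) (hα : 0 < α)
    (hexp : ∀ t : ℝ, φ (ψ t) = Complex.exp (Complex.I * (α : ℂ) * (t : ℂ)))
    (S : ℝ) (hS : S = 2 * Real.pi / α)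
    (Sig : Set Ω) (hSig : Sig = {ω : Ω | φ ω = 1}) :
    Continuous (fun p : Ω × ℝ => p.1 + ψ p.2) ∧
    Set.BijOn (fun p : Ω × ℝ => p.1 + ψ p.2) (Sig ×ˢ Set.Ico 0 S) Set.univ ∧
    ∃ e : (Sig ×ˢ Set.Ioo 0 S : Set (Ω × ℝ)) ≃ₜ (Sigᶜ : Set Ω),
      ∀ q : (Sig ×ˢ Set.Ioo 0 S : Set (Ω × ℝ)),
        (e q : Ω) = (q : Ω × ℝ).1 + ψ (q : Ω × ℝ).2 := by
  subst hSig
  have hSpos : 0 < S := by rw [hS]; positivity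
  have hφne : ∀ ω, φ ω ≠ 0 := fun ω h => by simpa [h] using hφabs ω
  set τ : Ω → ℝ := fun ω => (π + Complex.arg (-(φ ω))) / α with hτdef
  have key : ∀ ω, φ ω ≠ 1 →
      0 < τ ω ∧ τ ω < S ∧ Complex.exp (Complex.I * α * (τ ω)) = φ ω := by
    intro ω h
    obtain ⟨h1, h2, h3⟩ := arg_aux (φ ω) (hφabs ω) h
    refine ⟨div_pos h1 hα, ?_, ?_⟩
    · rw [hS]; exact (div_lt_div_iff_of_pos_right hα).2 h2
    · have hc : (α : ℂ) * ((τ ω : ℝ) : ℂ) = ((π + Complex.arg (-(φ ω)) : ℝ) : ℂ) := by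
        simp only [hτdef]
        push_cast
        field_simp
        exact mul_div_cancel_left₀ _ (Complex.ofReal_ne_zero.2 hα.ne')
      rw [mul_assoc, hc]
      exact h3
  have hmemSig : ∀ ω, φ ω ≠ 1 → φ (ω - ψ (τ ω)) = 1 := by
    intro ω h
    have hsub : φ (ω - ψ (τ ω)) * φ (ψ (τ ω)) = φ ω := by
      rw [← hφhom]; congr 1; abel
    rw [hexp, (key ω h).2.2] at hsub
    have := hφne ω
    field_simp at hsub
    exact hsub
  have huniq : ∀ s t : ℝ, |s - t| < S →
      Complex.exp (Complex.I * α * s) = Complex.exp (Complex.I * α * t) → s = t := by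
    intro s t hst h
    exact exp_unique α hα (by rwa [← hS]) h
  -- the image of Sig × Ioo is in Sigᶜ
  have hfwd : ∀ σ t, φ σ = 1 → t ∈ Set.Ioo 0 S → φ (σ + ψ t) ≠ 1 := by
    intro σ t hσ ht h
    rw [hφhom, hσ, one_mul, hexp] at h
    have h0 : Complex.exp (Complex.I * α * t) = Complex.exp (Complex.I * α * (0 : ℝ)) := by
      simpa using h
    have : t = 0 := huniq t 0 (by rw [sub_zero, abs_of_pos ht.1]; exact ht.2) h0
    exact ht.1.ne' this
  -- continuity of the flow
  have hcont : Continuous (fun p : Ω × ℝ => p.1 + ψ p.2) :=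
    continuous_fst.add (hψ.comp continuous_snd)
  refine ⟨hcont, ⟨fun _ _ => Set.mem_univ _, ?_, ?_⟩, ?_⟩
  · -- injectivity on Sig ×ˢ Ico 0 S
    rintro ⟨σ, t⟩ ⟨hσ, ht⟩ ⟨σ', t'⟩ ⟨hσ', ht'⟩ h
    simp only at h
    have hφeq : Complex.exp (Complex.I * α * t) = Complex.exp (Complex.I * α * t') := by
      have := congrArg φ h
      rw [hφhom, hφhom, hexp, hexp, Set.mem_setOf_eq.mp hσ, Set.mem_setOf_eq.mp hσ',
        one_mul, one_mul] at this
      exact this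
    have htt : t = t' := by
      refine huniq t t' ?_ hφeq
      rw [abs_sub_lt_iff]
      exact ⟨by linarith [ht.2, ht'.1], by linarith [ht'.2, ht.1]⟩
    subst htt
    have : σ = σ' := by
      have := h
      exact add_right_cancel this
    simp [this]
  · -- surjectivity
    intro ω _
    by_cases hω : φ ω = 1
    · exact ⟨(ω, 0), ⟨hω, le_refl 0, hSpos⟩, by simp⟩
    · obtain ⟨h1, h2, _⟩ := key ω hω
      exact ⟨(ω - ψ (τ ω), τ ω), ⟨hmemSig ω hω, h1.le, h2⟩, by simp⟩
  · -- the homeomorphism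
    have hτc : Continuous fun w : ({ω : Ω | φ ω = 1}ᶜ : Set Ω) => τ (w : Ω) := by
      rw [continuous_iff_continuousAt]
      intro w
      have hw : φ (w : Ω) ≠ 1 := w.2
      apply ContinuousAt.div_const
      apply ContinuousAt.add continuousAt_const
      have hn : ContinuousAt (fun w : ({ω : Ω | φ ω = 1}ᶜ : Set Ω) => -(φ (w : Ω))) w :=
        ((hφc.comp continuous_subtype_val).neg).continuousAt
      show ContinuousAt (Complex.arg ∘ fun w : ({ω : Ω | φ ω = 1}ᶜ : Set Ω) => -(φ (w : Ω))) w
      exact ContinuousAt.comp (Complex.continuousAt_arg (slit_aux _ (hφabs _) hw)) hn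
    refine ⟨⟨⟨fun q => ⟨(q : Ω × ℝ).1 + ψ (q : Ω × ℝ).2,
        hfwd _ _ q.2.1 q.2.2⟩,
      fun w => ⟨((w : Ω) - ψ (τ (w : Ω)), τ (w : Ω)),
        hmemSig _ w.2, (key _ w.2).1, (key _ w.2).2.1⟩, ?_, ?_⟩, ?_, ?_⟩, fun q => rfl⟩
    · rintro ⟨⟨σ, t⟩, hσ, ht⟩
      have hω : φ (σ + ψ t) ≠ 1 := hfwd σ t hσ ht
      have hτeq : τ (σ + ψ t) = t := by
        refine huniq _ _ ?_ ?_
        · rw [abs_sub_lt_iff]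
          obtain ⟨a1, a2, _⟩ := key _ hω
          exact ⟨by linarith [ht.1, ht.2], by linarith [ht.1, ht.2]⟩
        · rw [(key _ hω).2.2, hφhom, Set.mem_setOf_eq.mp hσ, one_mul, hexp]
      apply Subtype.ext
      simp only
      rw [hτeq]
      ext <;> simp [Prod.ext_iff] <;> abel
    · rintro ⟨ω, hω⟩
      apply Subtype.ext
      simp only
      abel
    · exact ((hcont.comp continuous_subtype_val).subtype_mk _)
    · refine Continuous.subtype_mk ?_ _
      exact (continuous_subtype_val.sub (hψ.comp hτc)).prodMk hτc

/-- The restricted flow `Φ(σ,t) = σ + ψ t` is a continuous bijection from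
`Σ × [0,S)` onto `Ω`, and restricts to a homeomorphism from `Σ × (0,S)`
onto `Ω \ Σ`, where `Σ = ker φ` and `S = 2π/|α|`. -/
theorem stmt_4 {Ω : Type*} [AddCommGroup Ω] [TopologicalSpace Ω] [IsTopologicalAddGroup Ω]
    [CompactSpace Ω] [TopologicalSpace.MetrizableSpace Ω]
    (ψ : ℝ →+ Ω) (hψ : Continuous ψ) (hd : DenseRange ψ)
    (φ : Ω → ℂ) (hφc : Continuous φ)
    (hφabs : ∀ ω : Ω, ‖φ ω‖ = 1)
    (hφhom : ∀ ω ω' : Ω, φ (ω + ω') = φ ω * φ ω')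
    (hφnt : ∃ ω : Ω, φ ω ≠ 1)
    (α : ℝ) (hα : α ≠ 0)
    (hexp : ∀ t : ℝ, φ (ψ t) = Complex.exp (Complex.I * (α : ℂ) * (t : ℂ)))
    (S : ℝ) (hS : S = 2 * Real.pi / |α|)
    (Sig : Set Ω) (hSig : Sig = {ω : Ω | φ ω = 1}) :
    Continuous (fun p : Ω × ℝ => p.1 + ψ p.2) ∧
    Set.BijOn (fun p : Ω × ℝ => p.1 + ψ p.2) (Sig ×ˢ Set.Ico 0 S) Set.univ ∧
    ∃ e : (Sig ×ˢ Set.Ioo 0 S : Set (Ω × ℝ)) ≃ₜ (Sigᶜ : Set Ω),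
      ∀ q : (Sig ×ˢ Set.Ioo 0 S : Set (Ω × ℝ)),
        (e q : Ω) = (q : Ω × ℝ).1 + ψ (q : Ω × ℝ).2 := by
  rcases hα.lt_or_gt with hneg | hpos
  · refine stmt_4_main ψ hψ (fun ω => (starRingEnd ℂ) (φ ω))
      (RCLike.continuous_conj.comp hφc) ?_ ?_ (-α) (by linarith) ?_ S ?_ Sig ?_
    · intro ω; rw [Complex.norm_conj]; exact hφabs ω
    · intro ω ω'; rw [hφhom, map_mul]
    · intro t
      rw [hexp, ← Complex.exp_conj]
      congr 1
      simp [Complex.conj_I]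
    · rw [hS, abs_of_neg hneg]
    · rw [hSig]; ext ω
      simp only [Set.mem_setOf_eq]
      constructor
      · intro h; rw [h]; exact map_one _
      · intro h
        have := congrArg (starRingEnd ℂ) h
        simpa using this
  · exact stmt_4_main ψ hψ φ hφc hφabs hφhom α hpos hexp S
      (by rw [hS, abs_of_pos hpos]) Sig hSig
end

section
/- With Ω, ψ, φ, Σ = ker φ, S = 2π/|α| as above, the restricted flow Φ : Σ × [0,S) → Ω, Φ(σ,t) = σ + ψ(t), is an isomorphism of measure spaces: for every Borel set B ⊂ Ω one has μ_Ω(B) = (1/S)·(μ_Σ ⊗ λ)(Φ⁻¹(B)), where μ_Ω and μ_Σ are the Haar probability measures of Ω and Σ and λ is Lebesgue measure on [0,S). -/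
open MeasureTheory
open scoped ENNReal

lemma periodic_lintegral_shift {S : ℝ} (hS : 0 < S) {g : ℝ → ℝ≥0∞} (hg : Measurable g)
    (hper : Function.Periodic g S) (s : ℝ) :
    ∫⁻ t in Set.Ioc 0 S, g (t + s) = ∫⁻ t in Set.Ioc 0 S, g t := by
  haveI : Fact (0 < S) := ⟨hS⟩
  set f : AddCircle S → ℝ≥0∞ := fun b => g ((AddCircle.equivIco S 0 b : ℝ)) with hf
  have hfm : Measurable f :=
    hg.comp (measurable_subtype_coe.comp (AddCircle.measurableEquivIco S 0).measurable)
  have hfg : ∀ t : ℝ, f (↑t) = g t := by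
    intro t
    have h1 : ((((AddCircle.equivIco S 0) (↑t : AddCircle S) : ℝ)) : AddCircle S)
        = (↑t : AddCircle S) := (AddCircle.equivIco S 0).symm_apply_apply (↑t : AddCircle S)
    rw [QuotientAddGroup.eq_iff_sub_mem] at h1
    obtain ⟨k, hk⟩ := AddSubgroup.mem_zmultiples_iff.mp h1
    have h2 : ((AddCircle.equivIco S 0) (↑t : AddCircle S) : ℝ) = t + k • S := by
      have := hk.symm; linarith [this, sub_eq_iff_eq_add.mp this]
    show g ((AddCircle.equivIco S 0) (↑t : AddCircle S) : ℝ) = g t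
    rw [h2, hper.zsmul k]
  have key : ∀ a : ℝ, ∫⁻ t in Set.Ioc a (a + S), g t = ∫⁻ b : AddCircle S, f b := by
    intro a
    rw [← AddCircle.lintegral_preimage S a f]
    exact setLIntegral_congr_fun measurableSet_Ioc
      (fun t _ => (hfg t).symm)
  have hchg : ∫⁻ t in Set.Ioc 0 S, g (t + s) = ∫⁻ t in Set.Ioc s (s + S), g t := by
    have := (measurePreserving_add_right (volume : Measure ℝ) s).setLIntegral_comp_emb
      (measurableEmbedding_addRight s) g (Set.Ioc 0 S)
    rw [this]
    have him : (fun x => x + s) '' Set.Ioc 0 S = Set.Ioc s (s + S) := by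
      rw [Set.image_add_const_Ioc]; ring_nf
    rw [him]
  rw [hchg, key s]
  have := key 0
  rw [zero_add] at this
  rw [this]

/-- Decomposition of the Haar measure along the flow: for every Borel set `B ⊆ Ω`,
`μ_Ω(B) = (1/S)·(μ_Σ ⊗ λ)(Φ⁻¹(B))`, where `Φ(σ,t) = σ + ψ t` on `Σ × [0,S)`. -/
theorem stmt_5 {Ω : Type*} [AddCommGroup Ω] [TopologicalSpace Ω] [IsTopologicalAddGroup Ω]
    [CompactSpace Ω] [TopologicalSpace.MetrizableSpace Ω]
    [MeasurableSpace Ω] [BorelSpace Ω]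
    (ψ : ℝ →+ Ω) (hψ : Continuous ψ) (hd : DenseRange ψ)
    (φ : Ω → ℂ) (hφc : Continuous φ)
    (hφabs : ∀ ω : Ω, ‖φ ω‖ = 1)
    (hφhom : ∀ ω ω' : Ω, φ (ω + ω') = φ ω * φ ω')
    (hφnt : ∃ ω : Ω, φ ω ≠ 1)
    (α : ℝ) (hα : α ≠ 0)
    (hexp : ∀ t : ℝ, φ (ψ t) = Complex.exp (Complex.I * (α : ℂ) * (t : ℂ)))
    (S : ℝ) (hS : S = 2 * Real.pi / |α|)
    (Sig : Set Ω) (hSig : Sig = {ω : Ω | φ ω = 1})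
    (μΩ : Measure Ω) [IsProbabilityMeasure μΩ]
    (hμΩinv : ∀ s : Set Ω, MeasurableSet s → ∀ ω : Ω, μΩ ((fun x => x + ω) ⁻¹' s) = μΩ s)
    (μSig : Measure Ω) [IsProbabilityMeasure μSig]
    (hμSigsupp : μSig Sigᶜ = 0)
    (hμSiginv : ∀ s : Set Ω, MeasurableSet s → ∀ σ ∈ Sig,
      μSig ((fun x => x + σ) ⁻¹' s) = μSig s) :
    ∀ B : Set Ω, MeasurableSet B →
      μΩ B = (μSig.prod volume)
          {p : Ω × ℝ | p.1 ∈ Sig ∧ p.2 ∈ Set.Ico 0 S ∧ p.1 + ψ p.2 ∈ B}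
        / ENNReal.ofReal S := by
  haveI : SecondCountableTopology Ω := by
    let _ := TopologicalSpace.metrizableSpaceMetric Ω
    infer_instance
  intro B hB
  have hSpos : 0 < S := by
    rw [hS]
    exact div_pos (by positivity) (abs_pos.mpr hα)
  have hSigm : MeasurableSet Sig := by
    rw [hSig]; exact (isClosed_eq hφc continuous_const).measurableSet
  have hψm : Measurable (ψ : ℝ → Ω) := hψ.measurable
  have mΦ : Measurable (fun p : Ω × ℝ => p.1 + ψ p.2) :=
    measurable_fst.add (hψm.comp measurable_snd)
  set ν : Measure Ω := Measure.map (fun p : Ω × ℝ => p.1 + ψ p.2)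
    (μSig.prod (volume.restrict (Set.Ioc 0 S))) with hν
  -- the slice formula
  have hνapp : ∀ C : Set Ω, MeasurableSet C →
      ν C = ∫⁻ t in Set.Ioc 0 S, μSig ((fun x => x + ψ t) ⁻¹' C) := by
    intro C hC
    rw [hν, Measure.map_apply mΦ hC, Measure.prod_apply_symm (mΦ hC)]
    rfl
  -- measurability of the slice function
  have hgm : ∀ C : Set Ω, MeasurableSet C →
      Measurable (fun t : ℝ => μSig ((fun x => x + ψ t) ⁻¹' C)) := by
    intro C hC
    exact measurable_measure_prodMk_right (mΦ hC)
  -- ψ S ∈ Sig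
  have hαS : α * S = 2 * Real.pi ∨ α * S = -(2 * Real.pi) := by
    rcases abs_cases α with ⟨h1, _⟩ | ⟨h1, _⟩
    · left; rw [hS, h1]; field_simp
    · right; rw [hS, h1]; field_simp
  have hψS : ψ S ∈ Sig := by
    rw [hSig]
    show φ (ψ S) = 1
    rw [hexp S]
    have e1 : Complex.I * (α : ℂ) * (S : ℂ) = ((α * S : ℝ) : ℂ) * Complex.I := by
      push_cast; ring
    rw [e1]
    rcases hαS with h | h
    · rw [h]; push_cast; exact Complex.exp_two_pi_mul_I
    · rw [h]; push_cast
      rw [show (-(2 * (Real.pi : ℂ))) * Complex.I = -(2 * (Real.pi : ℂ) * Complex.I) by ring,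
        Complex.exp_neg, Complex.exp_two_pi_mul_I, inv_one]
  -- periodicity of the slice function
  have hper : ∀ C : Set Ω, MeasurableSet C →
      Function.Periodic (fun t : ℝ => μSig ((fun x => x + ψ t) ⁻¹' C)) S := by
    intro C hC t
    show μSig ((fun x => x + ψ (t + S)) ⁻¹' C) = μSig ((fun x => x + ψ t) ⁻¹' C)
    have e : (fun x : Ω => x + ψ (t + S)) ⁻¹' C
        = (fun x : Ω => x + ψ S) ⁻¹' ((fun x : Ω => x + ψ t) ⁻¹' C) := by
      ext x
      simp only [Set.mem_preimage, map_add]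
      rw [show x + (ψ t + ψ S) = x + ψ S + ψ t by abel]
    rw [e, hμSiginv _ ((measurable_add_const (ψ t)) hC) (ψ S) hψS]
  -- translation invariance of ν
  have hφne : ∀ ω : Ω, φ ω ≠ 0 := by
    intro ω h
    have := hφabs ω
    rw [h] at this
    simp at this
  have hνinv : ∀ C : Set Ω, MeasurableSet C → ∀ ω : Ω,
      ν ((fun x => x + ω) ⁻¹' C) = ν C := by
    intro C hC ω
    set t0 : ℝ := Complex.arg (φ ω) / α with ht0
    have hφt0 : φ (ψ t0) = φ ω := by
      rw [hexp]
      have e2 : Complex.I * (α : ℂ) * (t0 : ℂ) = ((Complex.arg (φ ω) : ℝ) : ℂ) * Complex.I := by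
        rw [ht0]; push_cast
        field_simp [Complex.ofReal_ne_zero.mpr hα]
      rw [e2]
      conv_rhs => rw [← Complex.norm_mul_exp_arg_mul_I (φ ω)]
      rw [hφabs ω]
      simp
    set σ0 : Ω := ω - ψ t0 with hσ0def
    have hσ0 : σ0 ∈ Sig := by
      rw [hSig]
      show φ σ0 = 1
      have h2 : φ (σ0 + ψ t0) = φ σ0 * φ (ψ t0) := hφhom _ _
      rw [show σ0 + ψ t0 = ω by rw [hσ0def]; abel] at h2
      rw [hφt0] at h2
      have h3 : (1 : ℂ) * φ ω = φ σ0 * φ ω := by rw [one_mul, ← h2]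
      exact (mul_right_cancel₀ (hφne ω) h3).symm
    set C1 : Set Ω := (fun x => x + ψ t0) ⁻¹' C with hC1
    have hC1m : MeasurableSet C1 := (measurable_add_const (ψ t0)) hC
    have hpre : (fun x : Ω => x + ω) ⁻¹' C = (fun x => x + σ0) ⁻¹' C1 := by
      ext x
      simp only [Set.mem_preimage, hC1, hσ0def]
      rw [show x + (ω - ψ t0) + ψ t0 = x + ω by abel]
    have hm2 : MeasurableSet ((fun x : Ω => x + σ0) ⁻¹' C1) :=
      (measurable_add_const σ0) hC1m
    rw [hpre, hνapp _ hm2, hνapp _ hC]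
    have step1 : ∀ t : ℝ, μSig ((fun x => x + ψ t) ⁻¹' ((fun x => x + σ0) ⁻¹' C1))
        = (fun u : ℝ => μSig ((fun x => x + ψ u) ⁻¹' C)) (t + t0) := by
      intro t
      have e : (fun x : Ω => x + ψ t) ⁻¹' ((fun x => x + σ0) ⁻¹' C1)
          = (fun x : Ω => x + σ0) ⁻¹' ((fun x => x + ψ t) ⁻¹' C1) := by
        ext x
        simp only [Set.mem_preimage]
        rw [show x + ψ t + σ0 = x + σ0 + ψ t by abel]
      rw [e, hμSiginv _ ((measurable_add_const (ψ t)) hC1m) σ0 hσ0]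
      simp only
      congr 1
      ext x
      simp only [Set.mem_preimage, hC1, map_add]
      rw [show x + (ψ t + ψ t0) = x + ψ t + ψ t0 by abel]
    calc ∫⁻ t in Set.Ioc 0 S, μSig ((fun x => x + ψ t) ⁻¹' ((fun x => x + σ0) ⁻¹' C1))
        = ∫⁻ t in Set.Ioc 0 S, (fun u : ℝ => μSig ((fun x => x + ψ u) ⁻¹' C)) (t + t0) :=
          setLIntegral_congr_fun measurableSet_Ioc
            (fun t _ => step1 t)
      _ = ∫⁻ t in Set.Ioc 0 S, μSig ((fun x => x + ψ t) ⁻¹' C) :=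
          periodic_lintegral_shift hSpos (hgm C hC) (hper C hC) t0
  -- total mass of ν
  have hνuniv : ν Set.univ = ENNReal.ofReal S := by
    rw [hνapp _ MeasurableSet.univ]
    simp only [Set.preimage_univ, measure_univ]
    rw [setLIntegral_one, Real.volume_Ioc, sub_zero]
  haveI : IsFiniteMeasure ν := ⟨by rw [hνuniv]; exact ENNReal.ofReal_lt_top⟩
  -- indicator formula
  have hind : ∀ (μ' : Measure Ω) (C : Set Ω), MeasurableSet C → ∀ y : Ω,
      μ' ((fun x => x + y) ⁻¹' C) = ∫⁻ x, Set.indicator C (fun _ => (1 : ℝ≥0∞)) (x + y) ∂μ' := by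
    intro μ' C hC y
    have e : ∀ x : Ω, Set.indicator C (fun _ => (1 : ℝ≥0∞)) (x + y)
        = Set.indicator ((fun x => x + y) ⁻¹' C) (fun _ => (1 : ℝ≥0∞)) x := by
      intro x
      by_cases hx : x + y ∈ C
      · rw [Set.indicator_of_mem hx,
          Set.indicator_of_mem (show x ∈ (fun x => x + y) ⁻¹' C from hx) (fun _ => (1 : ℝ≥0∞))]
      · rw [Set.indicator_of_notMem hx,
          Set.indicator_of_notMem (show x ∉ (fun x => x + y) ⁻¹' C from hx) (fun _ => (1 : ℝ≥0∞))]
    simp_rw [e]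
    rw [lintegral_indicator ((measurable_add_const y) hC), setLIntegral_one]
  -- the main Fubini argument
  have main : ENNReal.ofReal S * μΩ B = ν B := by
    have hswap : ∫⁻ y, ∫⁻ x, Set.indicator B (fun _ => (1 : ℝ≥0∞)) (x + y) ∂μΩ ∂ν
        = ∫⁻ x, ∫⁻ y, Set.indicator B (fun _ => (1 : ℝ≥0∞)) (x + y) ∂ν ∂μΩ := by
      refine (lintegral_lintegral_swap ?_).symm
      refine Measurable.aemeasurable ?_
      exact ((measurable_one.indicator hB).comp (measurable_fst.add measurable_snd))
    calc ENNReal.ofReal S * μΩ B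
        = ∫⁻ _, μΩ B ∂ν := by rw [lintegral_const, hνuniv, mul_comm]
      _ = ∫⁻ y, μΩ ((fun x => x + y) ⁻¹' B) ∂ν := by
          refine lintegral_congr fun y => ?_
          rw [hμΩinv B hB y]
      _ = ∫⁻ y, ∫⁻ x, Set.indicator B (fun _ => (1 : ℝ≥0∞)) (x + y) ∂μΩ ∂ν :=
          lintegral_congr fun y => hind μΩ B hB y
      _ = ∫⁻ x, ∫⁻ y, Set.indicator B (fun _ => (1 : ℝ≥0∞)) (x + y) ∂ν ∂μΩ := hswap
      _ = ∫⁻ x, ν ((fun y => y + x) ⁻¹' B) ∂μΩ := by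
          refine lintegral_congr fun x => ?_
          have e : ∀ y : Ω, Set.indicator B (fun _ => (1 : ℝ≥0∞)) (x + y)
              = Set.indicator B (fun _ => (1 : ℝ≥0∞)) (y + x) := fun y => by rw [add_comm]
          simp_rw [e]
          exact (hind ν B hB x).symm
      _ = ∫⁻ _, ν B ∂μΩ := lintegral_congr fun x => hνinv B hB x
      _ = ν B := by rw [lintegral_const, measure_univ, mul_one]
  -- identify the RHS with ν B
  have hset : {p : Ω × ℝ | p.1 ∈ Sig ∧ p.2 ∈ Set.Ico 0 S ∧ p.1 + ψ p.2 ∈ B}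
      = (Sig ×ˢ Set.Ico 0 S) ∩ ((fun p : Ω × ℝ => p.1 + ψ p.2) ⁻¹' B) := by
    ext p
    simp only [Set.mem_setOf_eq, Set.mem_inter_iff, Set.mem_prod, Set.mem_preimage]
    tauto
  have hTm : MeasurableSet ((Sig ×ˢ Set.Ico 0 S) ∩ ((fun p : Ω × ℝ => p.1 + ψ p.2) ⁻¹' B)) :=
    (hSigm.prod measurableSet_Ico).inter (mΦ hB)
  have hT : (μSig.prod volume)
      {p : Ω × ℝ | p.1 ∈ Sig ∧ p.2 ∈ Set.Ico 0 S ∧ p.1 + ψ p.2 ∈ B} = ν B := by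
    rw [hset, Measure.prod_apply_symm hTm]
    have hslice : ∀ t : ℝ, (fun x : Ω => (x, t)) ⁻¹'
        ((Sig ×ˢ Set.Ico 0 S) ∩ ((fun p : Ω × ℝ => p.1 + ψ p.2) ⁻¹' B))
        = if t ∈ Set.Ico 0 S then Sig ∩ ((fun x => x + ψ t) ⁻¹' B) else ∅ := by
      intro t
      by_cases ht : t ∈ Set.Ico 0 S
      · rw [if_pos ht]
        ext x
        simp only [Set.mem_preimage, Set.mem_inter_iff, Set.mem_prod, Set.mem_setOf_eq, ht]
        tauto
      · rw [if_neg ht]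
        ext x
        simp only [Set.mem_preimage, Set.mem_inter_iff, Set.mem_prod, Set.mem_empty_iff_false]
        tauto
    have heq : ∀ t : ℝ, μSig ((fun x : Ω => (x, t)) ⁻¹'
        ((Sig ×ˢ Set.Ico 0 S) ∩ ((fun p : Ω × ℝ => p.1 + ψ p.2) ⁻¹' B)))
        = Set.indicator (Set.Ico 0 S) (fun u => μSig ((fun x => x + ψ u) ⁻¹' B)) t := by
      intro t
      rw [hslice t]
      by_cases ht : t ∈ Set.Ico 0 S
      · rw [if_pos ht, Set.indicator_of_mem ht, Set.inter_comm,
          measure_inter_conull hμSigsupp]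
      · rw [if_neg ht, Set.indicator_of_notMem ht, measure_empty]
    simp_rw [heq]
    rw [lintegral_indicator measurableSet_Ico, hνapp B hB]
    exact setLIntegral_congr Ico_ae_eq_Ioc
  rw [ENNReal.eq_div_iff (ENNReal.ofReal_pos.mpr hSpos).ne' ENNReal.ofReal_ne_top, hT]
  exact main
end

section
/- (Refined Poincaré recurrence, Dolgopyat) Let (X, F, μ) be a measure space and T : X → X an injective map such that: (a) T(B), T⁻¹(B) ∈ F for every B ∈ F; (b) μ(T(B)) = μ(B) for every B ∈ F; (c) there is a set A ∈ F with μ(A) < ∞ such that almost every point of X visits A in the future (i.e., for a.e. x there is k ≥ 1 with T^k(x) ∈ A). Then for every measurable set B ⊂ X, almost all points of B return to B infinitely many times in the future. -/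
open MeasureTheory Filter Set

section Aux

variable {X : Type*} [MeasurableSpace X] (μ : Measure X) (T : X → X)

/-- Iterated forward images are measurable and measure-preserving. -/
lemma stmt9_iter_image
    (hmeas : ∀ B : Set X, MeasurableSet B → MeasurableSet (T '' B) ∧ MeasurableSet (T ⁻¹' B))
    (hpres : ∀ B : Set X, MeasurableSet B → μ (T '' B) = μ B) :
    ∀ n : ℕ, ∀ C : Set X, MeasurableSet C →
      MeasurableSet (T^[n] '' C) ∧ μ (T^[n] '' C) = μ C := by
  intro n
  induction n with
  | zero =>
    intro C hC
    simp only [Function.iterate_zero, Set.image_id]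
    exact ⟨hC, trivial⟩
  | succ n ih =>
    intro C hC
    have h1 : T^[n+1] '' C = T '' (T^[n] '' C) := by
      rw [Function.iterate_succ', Set.image_comp]
    obtain ⟨hm, hp⟩ := ih C hC
    exact ⟨h1 ▸ (hmeas _ hm).1, by rw [h1, hpres _ hm, hp]⟩

/-- Key lemma: a measurable set whose points never return to it has measure zero. -/
lemma stmt9_key
    (hinj : Function.Injective T)
    (hmeas : ∀ B : Set X, MeasurableSet B → MeasurableSet (T '' B) ∧ MeasurableSet (T ⁻¹' B))
    (hpres : ∀ B : Set X, MeasurableSet B → μ (T '' B) = μ B)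
    (A : Set X) (hA : MeasurableSet A)(hAfin : μ A < ⊤)
    (hvisit : ∀ᵐ x ∂μ, ∃ k : ℕ, 1 ≤ k ∧ T^[k] x ∈ A)
    (S : Set X) (hS : MeasurableSet S)
    (hno : ∀ x ∈ S, ∀ k : ℕ, 1 ≤ k → T^[k] x ∉ S) : μ S = 0 := by
  have hT : Measurable T := fun s hs => (hmeas s hs).2
  have hTn : ∀ n : ℕ, Measurable (T^[n]) := fun n => hT.iterate n
  have hiter := stmt9_iter_image μ T hmeas hpres
  -- the set of points that visit A strictly in the future
  set G : Set X := ⋃ k : ℕ, T^[k+1] ⁻¹' A with hGdef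
  have hGmeas : MeasurableSet G := MeasurableSet.iUnion fun k => (hTn (k+1)) hA
  have hGc : μ Gᶜ = 0 := by
    have hsub : Gᶜ ⊆ {x | ¬ ∃ k : ℕ, 1 ≤ k ∧ T^[k] x ∈ A} := by
      intro x hx
      rintro ⟨k, hk1, hkA⟩
      obtain ⟨j, rfl⟩ : ∃ j, k = j + 1 := ⟨k - 1, (Nat.succ_pred_eq_of_pos hk1).symm⟩
      exact hx (Set.mem_iUnion.mpr ⟨j, hkA⟩)
    exact measure_mono_null hsub (ae_iff.mp hvisit)
  -- E k : points of S that hit A at time k+1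
  set E : ℕ → Set X := fun k => S ∩ T^[k+1] ⁻¹' A with hEdef
  have hEmeas : ∀ k, MeasurableSet (E k) := fun k => hS.inter ((hTn (k+1)) hA)
  -- images at the corresponding times are pairwise disjoint subsets of A
  have himdisj : ∀ i j : ℕ, i < j →
      Disjoint (T^[i+1] '' E i) (T^[j+1] '' E j) := by
    intro i j hij
    rw [Set.disjoint_left]
    rintro z ⟨x, hx, rfl⟩ ⟨y, hy, hxy⟩
    have hyx : T^[i+1] (T^[j-i] y) = T^[i+1] x := by
      rw [← Function.iterate_add_apply]
      have : i + 1 + (j - i) = j + 1 := by omega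
      rw [this, hxy]
    have hx' : T^[j-i] y = x := (hinj.iterate (i+1)) hyx
    exact hno y hy.1 (j - i) (by omega) (hx' ▸ hx.1)
  -- hence the measures of E k are summable, bounded by μ A
  have hsum : (∑' k, μ (E k)) ≠ ⊤ := by
    have h1 : ∀ k, μ (E k) = μ (T^[k+1] '' E k) := fun k => (hiter (k+1) _ (hEmeas k)).2.symm
    have h2 : (∑' k, μ (T^[k+1] '' E k)) = μ (⋃ k, T^[k+1] '' E k) := by
      refine (measure_iUnion ?_ (fun k => (hiter (k+1) _ (hEmeas k)).1)).symm
      intro i j hij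
      rcases lt_or_gt_of_ne hij with h | h
      · exact himdisj i j h
      · exact (himdisj j i h).symm
    have h3 : (⋃ k, T^[k+1] '' E k) ⊆ A := by
      rintro z ⟨s, ⟨k, rfl⟩, x, hx, rfl⟩
      exact hx.2
    have heq : (∑' k, μ (E k)) = μ (⋃ k, T^[k+1] '' E k) := by
      rw [← h2]; exact tsum_congr h1
    have hlt : (∑' k, μ (E k)) < ⊤ := by
      rw [heq]; exact (measure_mono h3).trans_lt hAfin
    exact hlt.ne
  -- Borel–Cantelli
  have hBC : μ (limsup E atTop) = 0 := measure_limsup_atTop_eq_zero hsum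
  -- a.e. point of S is in infinitely many E k
  have hae : ∀ n : ℕ, μ (S \ T^[n] ⁻¹' G) = 0 := by
    intro n
    have hm : MeasurableSet (S \ T^[n] ⁻¹' G) := hS.diff ((hTn n) hGmeas)
    have him : T^[n] '' (S \ T^[n] ⁻¹' G) ⊆ Gᶜ := by
      rintro z ⟨x, hx, rfl⟩
      exact hx.2
    have := (hiter n _ hm).2
    rw [← this]
    exact measure_mono_null him hGc
  have hdiff : μ (S \ ⋂ n, T^[n] ⁻¹' G) = 0 := by
    have : S \ ⋂ n, T^[n] ⁻¹' G ⊆ ⋃ n, (S \ T^[n] ⁻¹' G) := by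
      intro x hx
      rw [Set.mem_diff, Set.mem_iInter] at hx
      push_neg at hx
      obtain ⟨hxS, n, hn⟩ := hx
      exact Set.mem_iUnion.mpr ⟨n, hxS, hn⟩
    exact measure_mono_null this (measure_iUnion_null hae)
  have hsub : S ∩ ⋂ n, T^[n] ⁻¹' G ⊆ limsup E atTop := by
    rintro x ⟨hxS, hxG⟩
    rw [Set.mem_iInter] at hxG
    rw [mem_limsup_iff_frequently_mem, Filter.frequently_atTop]
    intro n
    obtain ⟨k, hk⟩ := Set.mem_iUnion.mp (hxG n)
    refine ⟨n + k, Nat.le_add_right n k, hxS, ?_⟩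
    have : T^[k+1] (T^[n] x) = T^[n+k+1] x := by
      rw [← Function.iterate_add_apply]
      congr 1
      omega
    rw [Set.mem_preimage] at hk ⊢
    have hnk : n + k + 1 = n + (k + 1) := by omega
    rw [hnk] at this ⊢
    rw [← this]; exact hk
  refine le_antisymm ?_ zero_le
  calc μ S ≤ μ ((S \ ⋂ n, T^[n] ⁻¹' G) ∪ limsup E atTop) := by
        refine measure_mono fun x hx => ?_
        by_cases h : x ∈ ⋂ n, T^[n] ⁻¹' G
        · exact Or.inr (hsub ⟨hx, h⟩)
        · exact Or.inl ⟨hx, h⟩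
    _ ≤ μ (S \ ⋂ n, T^[n] ⁻¹' G) + μ (limsup E atTop) := measure_union_le _ _
    _ = 0 := by rw [hdiff, hBC, add_zero]

end Aux

/-- Refined Poincaré recurrence theorem (Dolgopyat): if `T` is injective,
bi-measurable and measure-preserving on a (possibly infinite) measure space, and
almost every point visits a set `A` of finite measure in the future, then for
every measurable `B`, almost all points of `B` return to `B` infinitely often. -/
theorem stmt_9 {X : Type*} [MeasurableSpace X] (μ : Measure X) (T : X → X)
    (hinj : Function.Injective T)
    (hmeas : ∀ B : Set X, MeasurableSet B → MeasurableSet (T '' B) ∧ MeasurableSet (T ⁻¹' B))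
    (hpres : ∀ B : Set X, MeasurableSet B → μ (T '' B) = μ B)
    (A : Set X) (hA : MeasurableSet A) (hAfin : μ A < ⊤)
    (hvisit : ∀ᵐ x ∂μ, ∃ k : ℕ, 1 ≤ k ∧ T^[k] x ∈ A) :
    ∀ B : Set X, MeasurableSet B →
      μ {x ∈ B | ¬ ∀ N : ℕ, ∃ k : ℕ, N ≤ k ∧ 1 ≤ k ∧ T^[k] x ∈ B} = 0 := by
  have hT : Measurable T := fun s hs => (hmeas s hs).2
  have hTn : ∀ n : ℕ, Measurable (T^[n]) := fun n => hT.iterate n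
  have hiter := stmt9_iter_image μ T hmeas hpres
  have hkey := stmt9_key μ T hinj hmeas hpres A hA hAfin hvisit
  -- the complement of the range of T is null
  have hrange : MeasurableSet (Set.range T) := by
    rw [← Set.image_univ]; exact (hmeas _ MeasurableSet.univ).1
  have hW : μ (Set.range T)ᶜ = 0 := by
    refine hkey _ hrange.compl ?_
    intro x hx k hk hxk
    obtain ⟨j, rfl⟩ : ∃ j, k = j + 1 := ⟨k - 1, (Nat.succ_pred_eq_of_pos hk).symm⟩
    exact hxk ⟨T^[j] x, (Function.iterate_succ_apply' T j x).symm⟩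
  -- preimages preserve measure
  have hpre : ∀ C : Set X, MeasurableSet C → μ (T ⁻¹' C) = μ C := by
    intro C hC
    have h1 : T '' (T ⁻¹' C) = C ∩ Set.range T := Set.image_preimage_eq_inter_range
    have h2 : μ (T ⁻¹' C) = μ (C ∩ Set.range T) := by
      rw [← h1]; exact (hpres _ (hmeas C hC).2).symm
    rw [h2, measure_inter_conull hW]
  have hpren : ∀ n : ℕ, ∀ C : Set X, MeasurableSet C → μ (T^[n] ⁻¹' C) = μ C := by
    intro n
    induction n with
    | zero => intro C _; simp
    | succ n ih =>
      intro C hC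
      have h1 : T^[n+1] ⁻¹' C = T^[n] ⁻¹' (T ⁻¹' C) := by
        rw [Function.iterate_succ', Set.preimage_comp]
      rw [h1, ih _ (hmeas C hC).2, hpre C hC]
  intro B hB
  -- the set of points of B that never return to B
  set N : Set X := B ∩ ⋂ k : ℕ, (T^[k+1] ⁻¹' B)ᶜ with hNdef
  have hNmeas : MeasurableSet N :=
    hB.inter (MeasurableSet.iInter fun k => ((hTn (k+1)) hB).compl)
  have hNprop : ∀ x ∈ N, x ∈ B ∧ ∀ k : ℕ, 1 ≤ k → T^[k] x ∉ B := by
    rintro x ⟨hxB, hxI⟩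
    refine ⟨hxB, fun k hk hxk => ?_⟩
    obtain ⟨j, rfl⟩ : ∃ j, k = j + 1 := ⟨k - 1, (Nat.succ_pred_eq_of_pos hk).symm⟩
    rw [Set.mem_iInter] at hxI
    exact hxI j hxk
  have hNzero : μ N = 0 := by
    refine hkey N hNmeas ?_
    intro x hx k hk hxk
    exact (hNprop x hx).2 k hk (hNprop _ hxk).1
  -- the bad set is contained in the union of preimages of N
  have hbad : {x ∈ B | ¬ ∀ N : ℕ, ∃ k : ℕ, N ≤ k ∧ 1 ≤ k ∧ T^[k] x ∈ B}
      ⊆ ⋃ m : ℕ, T^[m] ⁻¹' N := by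
    rintro x ⟨hxB, hxbad⟩
    push_neg at hxbad
    obtain ⟨M, hM⟩ := hxbad
    classical
    set P : ℕ → Prop := fun k => T^[k] x ∈ B with hPdef
    set m : ℕ := Nat.findGreatest P M with hmdef
    have hPm : P m := Nat.findGreatest_spec (Nat.zero_le M) (by simpa [hPdef] using hxB)
    refine Set.mem_iUnion.mpr ⟨m, ?_⟩
    rw [Set.mem_preimage]
    refine ⟨hPm, Set.mem_iInter.mpr fun j => ?_⟩
    intro hj
    rw [Set.mem_preimage, ← Function.iterate_add_apply] at hj
    have hPmj : P (j + 1 + m) := hj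
    by_cases hle : j + 1 + m ≤ M
    · exact Nat.findGreatest_is_greatest (by omega) hle hPmj
    · have h1 : M ≤ j + 1 + m := by omega
      exact hM (j + 1 + m) h1 (by omega) hPmj
  refine measure_mono_null hbad (measure_iUnion_null fun m => ?_)
  rw [hpren m N hNmeas]
  exact hNzero
end

section
/- (Finite-measure absorbing set) Let f : D ⊂ Ω × (0,∞) → Ω × (0,∞) be a measure-preserving embedding (continuous, injective, preserving μ_Ω ⊗ λ) and W : Ω × (0,∞) → ℝ continuous with 0 < β ≤ ∂_r W(ω,r) ≤ δ for all (ω,r), and W(f(ω,r)) ≤ W(ω,r) + k(r) on D for some decreasing bounded k with lim_{r→∞} k(r) = 0. Let (ε_j), (W_j) be positive sequences with Σ ε_j < ∞, W_j → ∞, and ε_j⁻¹ k(W_j/(4δ)) → 0. Define A = ⋃_j A_j where A_j = {(ω,r) : |W(ω,r) − W_j| ≤ ε_j}. Then (μ_Ω ⊗ λ)(A) < ∞, and every forward orbit (ω_n, r_n) = fⁿ(ω_0, r_0) with limsup_n r_n = ∞ enters A: there exists K ∈ ℕ with (ω_K, r_K) ∈ A. -/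
open MeasureTheory Filter

/-- Finite-measure absorbing set: the set `A = ⋃_j {|W − W_j| ≤ ε_j}` has finite
measure, and every forward orbit of the measure-preserving embedding `f` with
`limsup r_n = ∞` enters `A`. -/
theorem stmt_10 {Ω : Type*} [AddCommGroup Ω] [TopologicalSpace Ω] [IsTopologicalAddGroup Ω]
    [CompactSpace Ω] [TopologicalSpace.MetrizableSpace Ω]
    [MeasurableSpace Ω] [BorelSpace Ω]
    (μΩ : Measure Ω) [IsProbabilityMeasure μΩ]
    (hμΩinv : ∀ s : Set Ω, MeasurableSet s → ∀ ω : Ω, μΩ ((fun x => x + ω) ⁻¹' s) = μΩ s)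
    (D : Set (Ω × ℝ)) (hDopen : IsOpen D) (hDsub : D ⊆ Set.univ ×ˢ Set.Ioi (0 : ℝ))
    (f : Ω × ℝ → Ω × ℝ) (hfc : ContinuousOn f D) (hfinj : Set.InjOn f D)
    (hfmaps : Set.MapsTo f D (Set.univ ×ˢ Set.Ioi (0 : ℝ)))
    (hfpres : ∀ B ⊆ D, MeasurableSet B → (μΩ.prod volume) (f '' B) = (μΩ.prod volume) B)
    (W : Ω × ℝ → ℝ) (hWc : ContinuousOn W (Set.univ ×ˢ Set.Ioi (0 : ℝ)))
    (W' : Ω × ℝ → ℝ) (β δ : ℝ) (hβ : 0 < β) (hδ : 0 < δ)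
    (hW' : ∀ (ω : Ω) (r : ℝ), 0 < r → HasDerivAt (fun s => W (ω, s)) (W' (ω, r)) r)
    (hWbound : ∀ (ω : Ω) (r : ℝ), 0 < r → β ≤ W' (ω, r) ∧ W' (ω, r) ≤ δ)
    (k : ℝ → ℝ) (hkdec : AntitoneOn k (Set.Ioi 0)) (hkbdd : ∃ M, ∀ r > (0 : ℝ), |k r| ≤ M)
    (hk0 : Tendsto k atTop (nhds 0))
    (hadiab : ∀ p ∈ D, W (f p) ≤ W p + k p.2)
    (ε Wj : ℕ → ℝ) (hε : ∀ j, 0 < ε j) (hεsum : Summable ε)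
    (hWj : Tendsto Wj atTop atTop)
    (hεk : Tendsto (fun j => k (Wj j / (4 * δ)) / ε j) atTop (nhds 0)) :
    (μΩ.prod volume) (⋃ j, {p : Ω × ℝ | 0 < p.2 ∧ |W p - Wj j| ≤ ε j}) < ⊤ ∧
    ∀ x : ℕ → Ω × ℝ, (∀ n, x n ∈ D ∧ x (n + 1) = f (x n)) →
      (∀ M : ℝ, ∀ N : ℕ, ∃ n, N ≤ n ∧ M < (x n).2) →
      ∃ K : ℕ, x K ∈ ⋃ j, {p : Ω × ℝ | 0 < p.2 ∧ |W p - Wj j| ≤ ε j} := by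
  classical
  obtain ⟨M, hM⟩ := hkbdd
  have hM0 : 0 ≤ M := (abs_nonneg _).trans (hM 1 one_pos)
  have hU : IsOpen ((Set.univ : Set Ω) ×ˢ Set.Ioi (0 : ℝ)) := isOpen_univ.prod isOpen_Ioi
  -- mean value estimates
  have key : ∀ (ω : Ω) (r₁ r₂ : ℝ), 0 < r₁ → r₁ ≤ r₂ →
      β * (r₂ - r₁) ≤ W (ω, r₂) - W (ω, r₁) ∧ W (ω, r₂) - W (ω, r₁) ≤ δ * (r₂ - r₁) := by
    intro ω r₁ r₂ h1 h12
    have hconv : Convex ℝ (Set.Ici r₁) := convex_Ici _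
    have hcont : ContinuousOn (fun s => W (ω, s)) (Set.Ici r₁) := fun s hs =>
      ((hW' ω s (lt_of_lt_of_le h1 hs)).continuousAt).continuousWithinAt
    have hpos : ∀ s ∈ interior (Set.Ici r₁), 0 < s := by
      intro s hs
      rw [interior_Ici] at hs
      exact h1.trans hs
    have hdiff : DifferentiableOn ℝ (fun s => W (ω, s)) (interior (Set.Ici r₁)) := fun s hs =>
      ((hW' ω s (hpos s hs)).differentiableAt).differentiableWithinAt
    have hderiv : ∀ s ∈ interior (Set.Ici r₁), deriv (fun s => W (ω, s)) s = W' (ω, s) :=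
      fun s hs => (hW' ω s (hpos s hs)).deriv
    constructor
    · exact hconv.mul_sub_le_image_sub_of_le_deriv hcont hdiff
        (fun s hs => (hderiv s hs).symm ▸ (hWbound ω s (hpos s hs)).1)
        r₁ Set.self_mem_Ici r₂ h12 h12
    · exact hconv.image_sub_le_mul_sub_of_deriv_le hcont hdiff
        (fun s hs => (hderiv s hs) ▸ (hWbound ω s (hpos s hs)).2)
        r₁ Set.self_mem_Ici r₂ h12 h12
  -- measurability of the bands
  have hAmeas : ∀ j, MeasurableSet {p : Ω × ℝ | 0 < p.2 ∧ |W p - Wj j| ≤ ε j} := by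
    intro j
    have hopen : IsOpen ((Set.univ ×ˢ Set.Ioi (0 : ℝ)) ∩ W ⁻¹' {y | ε j < |y - Wj j|}) :=
      hWc.isOpen_inter_preimage hU
        (isOpen_lt continuous_const ((continuous_id.sub continuous_const).abs))
    have heq : {p : Ω × ℝ | 0 < p.2 ∧ |W p - Wj j| ≤ ε j}
        = (Set.univ ×ˢ Set.Ioi (0 : ℝ)) \
          ((Set.univ ×ˢ Set.Ioi (0 : ℝ)) ∩ W ⁻¹' {y | ε j < |y - Wj j|}) := by
      ext p
      constructor
      · rintro ⟨h1, h2⟩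
        exact ⟨⟨trivial, h1⟩, fun h => absurd h.2 (not_lt.mpr h2)⟩
      · rintro ⟨⟨-, h1⟩, h2⟩
        exact ⟨h1, not_lt.mp fun h => h2 ⟨⟨trivial, h1⟩, h⟩⟩
    rw [heq]
    exact hU.measurableSet.diff hopen.measurableSet
  -- slice bound
  have hslice : ∀ (j : ℕ) (ω : Ω),
      volume {r : ℝ | 0 < r ∧ |W (ω, r) - Wj j| ≤ ε j} ≤ ENNReal.ofReal (4 / β * ε j) := by
    intro j ω
    by_cases hne : {r : ℝ | 0 < r ∧ |W (ω, r) - Wj j| ≤ ε j}.Nonempty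
    · obtain ⟨r0, hr0, hr0'⟩ := hne
      have hsub : {r : ℝ | 0 < r ∧ |W (ω, r) - Wj j| ≤ ε j}
          ⊆ Set.Icc (r0 - 2 * ε j / β) (r0 + 2 * ε j / β) := by
        rintro r ⟨hr, hr'⟩
        have ha := abs_le.mp hr'
        have hb := abs_le.mp hr0'
        rcases le_total r r0 with h | h
        · have h1 := (key ω r r0 hr h).1
          have h2 : r0 - r ≤ 2 * ε j / β := by
            rw [le_div_iff₀ hβ]
            nlinarith
          have hnn : 0 ≤ 2 * ε j / β := div_nonneg (by nlinarith [hε j]) hβ.le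
          constructor
          · linarith
          · linarith
        · have h1 := (key ω r0 r hr0 h).1
          have h2 : r - r0 ≤ 2 * ε j / β := by
            rw [le_div_iff₀ hβ]
            nlinarith
          have hnn : 0 ≤ 2 * ε j / β := div_nonneg (by nlinarith [hε j]) hβ.le
          constructor
          · linarith
          · linarith
      calc volume {r : ℝ | 0 < r ∧ |W (ω, r) - Wj j| ≤ ε j}
          ≤ volume (Set.Icc (r0 - 2 * ε j / β) (r0 + 2 * ε j / β)) := measure_mono hsub
        _ = ENNReal.ofReal (r0 + 2 * ε j / β - (r0 - 2 * ε j / β)) := Real.volume_Icc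
        _ ≤ ENNReal.ofReal (4 / β * ε j) := by
            apply ENNReal.ofReal_le_ofReal
            have : r0 + 2 * ε j / β - (r0 - 2 * ε j / β) = 4 / β * ε j := by ring
            linarith [this.le]
    · rw [Set.not_nonempty_iff_eq_empty] at hne
      simp [hne]
  -- measure of each band
  have hAj : ∀ j, (μΩ.prod volume) {p : Ω × ℝ | 0 < p.2 ∧ |W p - Wj j| ≤ ε j}
      ≤ ENNReal.ofReal (4 / β * ε j) := by
    intro j
    rw [Measure.prod_apply (hAmeas j)]
    calc ∫⁻ ω, volume (Prod.mk ω ⁻¹' {p : Ω × ℝ | 0 < p.2 ∧ |W p - Wj j| ≤ ε j}) ∂μΩ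
        ≤ ∫⁻ _, ENNReal.ofReal (4 / β * ε j) ∂μΩ := lintegral_mono fun ω => hslice j ω
      _ = ENNReal.ofReal (4 / β * ε j) := by simp
  have hsum : ∑' j, ENNReal.ofReal (4 / β * ε j) < ⊤ := by
    rw [← ENNReal.ofReal_tsum_of_nonneg
      (fun j => mul_nonneg (div_nonneg (by norm_num) hβ.le) (hε j).le)
      (hεsum.mul_left (4 / β))]
    exact ENNReal.ofReal_lt_top
  refine ⟨lt_of_le_of_lt ((measure_iUnion_le _).trans (ENNReal.tsum_le_tsum hAj)) hsum, ?_⟩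
  -- orbit part
  intro x hx horbit
  have hxpos : ∀ n, 0 < (x n).2 := fun n => (hDsub (hx n).1).2
  -- bounds on W at r = 1 over the compact group
  have hΩne : Nonempty Ω := ⟨0⟩
  have hcont1 : Continuous (fun ω : Ω => W (ω, 1)) := by
    have hg : Continuous (fun ω : Ω => (ω, (1 : ℝ))) := continuous_id.prodMk continuous_const
    rw [continuous_iff_continuousAt]
    intro ω
    have h1 : ContinuousAt W (ω, 1) :=
      hWc.continuousAt (hU.mem_nhds (by simp))
    show ContinuousAt (W ∘ fun ω : Ω => (ω, (1 : ℝ))) ω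
    exact ContinuousAt.comp (f := fun ω : Ω => (ω, (1 : ℝ))) (x := ω) h1 hg.continuousAt
  obtain ⟨ω₁, -, hCmax'⟩ := isCompact_univ.exists_isMaxOn Set.univ_nonempty
    hcont1.continuousOn
  obtain ⟨ω₂, -, hcmin'⟩ := isCompact_univ.exists_isMinOn Set.univ_nonempty
    hcont1.continuousOn
  have hCmax : ∀ ω : Ω, ∀ _ : True, W (ω, 1) ≤ W (ω₁, 1) := fun ω _ => hCmax' (Set.mem_univ ω)
  have hcmin : ∀ ω : Ω, ∀ _ : True, W (ω₂, 1) ≤ W (ω, 1) := fun ω _ => hcmin' (Set.mem_univ ω)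
  set C := W (ω₁, 1) with hCdef
  set c := W (ω₂, 1) with hcdef
  have hub : ∀ (ω : Ω) (r : ℝ), 0 < r → W (ω, r) ≤ C + δ * r := by
    intro ω r hr
    have hC' := hCmax ω trivial
    rcases le_total r 1 with h | h
    · have h1 := (key ω r 1 hr h).1
      nlinarith [mul_nonneg hβ.le (sub_nonneg.mpr h), mul_pos hδ hr]
    · have h1 := (key ω 1 r one_pos h).2
      nlinarith
  have hlb : ∀ (ω : Ω) (r : ℝ), 1 ≤ r → c + β * (r - 1) ≤ W (ω, r) := by
    intro ω r h
    have h1 := (key ω 1 r one_pos h).1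
    have h2 := hcmin ω trivial
    linarith
  -- choose a suitable index j
  have hT1 : ∀ᶠ j in atTop, max (W (x 0) + 2) (4 * (1 + M + |C|)) ≤ Wj j :=
    hWj.eventually_ge_atTop _
  have hT2 : ∀ᶠ j in atTop, ε j < 1 :=
    hεsum.tendsto_atTop_zero.eventually_lt_const one_pos
  have hT3 : ∀ᶠ j in atTop, k (Wj j / (4 * δ)) / ε j < 2 :=
    hεk.eventually_lt_const (by norm_num)
  obtain ⟨j, hj1, hj2, hj3⟩ := (hT1.and (hT2.and hT3)).exists
  have hWjbig : 4 * (1 + M + |C|) ≤ Wj j := le_trans (le_max_right _ _) hj1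
  have hWjx0 : W (x 0) + 2 ≤ Wj j := le_trans (le_max_left _ _) hj1
  have hWjpos : 0 < Wj j := by
    have := abs_nonneg C
    linarith
  have hk2 : k (Wj j / (4 * δ)) < 2 * ε j := (div_lt_iff₀ (hε j)).mp hj3
  -- the orbit eventually exceeds the level Wj j - ε j
  have hex : ∃ n, Wj j - ε j < W (x n) := by
    obtain ⟨n, -, hn⟩ := horbit (max 1 ((Wj j - ε j - c) / β + 1)) 0
    refine ⟨n, ?_⟩
    have hr1 : (1 : ℝ) ≤ (x n).2 := le_of_lt (lt_of_le_of_lt (le_max_left _ _) hn)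
    have hr2 : (Wj j - ε j - c) / β + 1 < (x n).2 := lt_of_le_of_lt (le_max_right _ _) hn
    have hb : Wj j - ε j - c < ((x n).2 - 1) * β := (div_lt_iff₀ hβ).mp (by linarith)
    have hlb' := hlb (x n).1 (x n).2 hr1
    have heta : W ((x n).1, (x n).2) = W (x n) := rfl
    have hcomm : ((x n).2 - 1) * β = β * ((x n).2 - 1) := mul_comm _ _
    linarith
  have hP0 : ¬ (Wj j - ε j < W (x 0)) := by
    push_neg
    linarith
  set K := Nat.find hex with hKdef
  have hKspec : Wj j - ε j < W (x K) := Nat.find_spec hex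
  have hKne : K ≠ 0 := fun h => hP0 (h ▸ hKspec)
  obtain ⟨m, hm⟩ := Nat.exists_eq_succ_of_ne_zero hKne
  have hmlt : ¬ (Wj j - ε j < W (x m)) := Nat.find_min hex (by omega)
  push_neg at hmlt
  have hstep : W (x (m + 1)) ≤ W (x m) + k ((x m).2) := by
    rw [(hx m).2]
    exact hadiab (x m) (hx m).1
  have hkm : |k ((x m).2)| ≤ M := hM _ (hxpos m)
  have hKm : Wj j - ε j < W (x (m + 1)) := by
    have hm1 : m + 1 = K := by omega
    rw [hm1]
    exact hKspec
  have hkm2 := (abs_le.mp hkm).2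
  have hWm_lb : Wj j - ε j - M < W (x m) := by linarith
  have hub' : W (x m) ≤ C + δ * (x m).2 := hub (x m).1 (x m).2 (hxpos m)
  have hrm : Wj j / (4 * δ) ≤ (x m).2 := by
    rw [div_le_iff₀ (by positivity)]
    have h4 : (x m).2 * (4 * δ) = 4 * (δ * (x m).2) := by ring
    have hCabs : C ≤ |C| := le_abs_self C
    linarith
  have hk_le : k ((x m).2) ≤ k (Wj j / (4 * δ)) :=
    hkdec (Set.mem_Ioi.mpr (by positivity)) (Set.mem_Ioi.mpr (hxpos m)) hrm
  have hfinal : |W (x (m + 1)) - Wj j| ≤ ε j :=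
    abs_le.mpr ⟨by linarith, by linarith⟩
  exact ⟨m + 1, Set.mem_iUnion.mpr ⟨j, hxpos (m + 1), hfinal⟩⟩
end

section
/- (Well-posedness of the ping-pong map) Let p ∈ C²(ℝ) with 0 < a ≤ p(t) ≤ b and ‖p‖_{C²} < ∞, and let v* = 2·max{sup_t ṗ(t), 0}. Then for every (t_0, v_0) ∈ ℝ × (v*, ∞) the equation (t̃ − t_0)·v_0 = p(t̃) has a unique solution t̃ > t_0, and the map (t_0, v_0) ↦ t̃(t_0, v_0) is C¹ on ℝ × (v*, ∞); moreover v_1 = v_0 − 2ṗ(t̃) > 0. -/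
noncomputable def shearCLE (c α β : ℝ) (hc : c ≠ 0) : (ℝ × ℝ × ℝ) ≃L[ℝ] (ℝ × ℝ × ℝ) :=
  LinearEquiv.toContinuousLinearEquiv
  { toFun := fun x => (c * x.1 + α * x.2.1 + β * x.2.2, x.2.1, x.2.2)
    invFun := fun x => ((x.1 - α * x.2.1 - β * x.2.2) / c, x.2.1, x.2.2)
    map_add' := by intro x y; dsimp; refine Prod.ext ?_ rfl; ring
    map_smul' := by intro m x; dsimp; refine Prod.ext ?_ rfl; ring
    left_inv := by intro x; dsimp; refine Prod.ext ?_ rfl; field_simp; ring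
    right_inv := by intro x; dsimp; refine Prod.ext ?_ rfl; field_simp; ring }

theorem shearCLE_apply (c α β : ℝ) (hc : c ≠ 0) (x : ℝ × ℝ × ℝ) :
    shearCLE c α β hc x = (c * x.1 + α * x.2.1 + β * x.2.2, x.2.1, x.2.2) := rfl

/-- Well-posedness of the ping-pong map: for `v₀ > v*` the impact equation
`(t̃ − t₀)v₀ = p(t̃)` has a unique solution `t̃ > t₀`, depending `C¹` on
`(t₀, v₀)`, and the reflected velocity `v₁ = v₀ − 2ṗ(t̃)` is positive. -/
theorem stmt_15 (p : ℝ → ℝ) (hp : ContDiff ℝ 2 p)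
    (a b : ℝ) (ha : 0 < a) (hpb : ∀ t : ℝ, a ≤ p t ∧ p t ≤ b)
    (M : ℝ) (hM : ∀ t : ℝ, |deriv p t| ≤ M ∧ |deriv (deriv p) t| ≤ M)
    (vstar : ℝ) (hv : vstar = 2 * max (⨆ t : ℝ, deriv p t) 0) :
    ∃ tt : ℝ × ℝ → ℝ,
      ContDiffOn ℝ 1 tt (Set.univ ×ˢ Set.Ioi vstar) ∧
      ∀ t0 v0 : ℝ, vstar < v0 →
        (t0 < tt (t0, v0) ∧ (tt (t0, v0) - t0) * v0 = p (tt (t0, v0))) ∧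
        (∀ s : ℝ, t0 < s → (s - t0) * v0 = p s → s = tt (t0, v0)) ∧
        0 < v0 - 2 * deriv p (tt (t0, v0)) := by
  have hd : Differentiable ℝ p := hp.differentiable (by norm_num)
  have hbd : ∀ t : ℝ, deriv p t ≤ vstar / 2 := by
    intro t
    have hA : BddAbove (Set.range (deriv p)) :=
      ⟨M, by rintro y ⟨t, rfl⟩; exact (abs_le.1 (hM t).1).2⟩
    have h1 : deriv p t ≤ ⨆ t : ℝ, deriv p t := le_ciSup hA t
    have h2 : (⨆ t : ℝ, deriv p t) ≤ max (⨆ t : ℝ, deriv p t) 0 := le_max_left _ _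
    rw [hv]; linarith
  have hvs0 : 0 ≤ vstar := by
    rw [hv]
    have := le_max_right (⨆ t : ℝ, deriv p t) (0 : ℝ)
    linarith
  have hmono : ∀ t0 v0 : ℝ, vstar < v0 →
      StrictMono (fun s : ℝ => (s - t0) * v0 - p s) := by
    intro t0 v0 hv0
    apply strictMono_of_deriv_pos
    intro s
    have hder : HasDerivAt (fun s : ℝ => (s - t0) * v0 - p s) (1 * v0 - deriv p s) s :=
      (((hasDerivAt_id s).sub_const t0).mul_const v0).sub (hd s).hasDerivAt
    rw [hder.deriv]
    have := hbd s
    linarith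
  have huniq : ∀ t0 v0 : ℝ, vstar < v0 → ∀ s1 s2 : ℝ,
      (s1 - t0) * v0 = p s1 → (s2 - t0) * v0 = p s2 → s1 = s2 := by
    intro t0 v0 h s1 s2 h1 h2
    apply (hmono t0 v0 h).injective
    show (s1 - t0) * v0 - p s1 = (s2 - t0) * v0 - p s2
    rw [h1, h2]; simp
  have hroot : ∀ t0 v0 : ℝ, vstar < v0 → ∃ s : ℝ, t0 < s ∧ (s - t0) * v0 = p s := by
    intro t0 v0 hv0
    have hv0p : 0 < v0 := lt_of_le_of_lt hvs0 hv0
    have hb0 : 0 < b := lt_of_lt_of_le ha ((hpb 0).1.trans (hpb 0).2)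
    have hTle : t0 ≤ t0 + b / v0 := by
      have : 0 ≤ b / v0 := div_nonneg hb0.le hv0p.le
      linarith
    have gcont : Continuous (fun s : ℝ => (s - t0) * v0 - p s) :=
      (((continuous_id.sub continuous_const).mul continuous_const).sub hp.continuous)
    have hneg : (t0 - t0) * v0 - p t0 < 0 := by
      have := (hpb t0).1; simp; linarith
    have hTv : (t0 + b / v0 - t0) * v0 = b := by field_simp; ring
    have hpos : 0 ≤ (t0 + b / v0 - t0) * v0 - p (t0 + b / v0) := by
      rw [hTv]
      have := (hpb (t0 + b / v0)).2; linarith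
    obtain ⟨s, hsmem, hgs⟩ := intermediate_value_Icc hTle gcont.continuousOn
      (Set.mem_Icc.2 ⟨hneg.le, hpos⟩)
    have hgs' : (s - t0) * v0 - p s = 0 := hgs
    have hr : (s - t0) * v0 = p s := by linarith
    refine ⟨s, ?_, hr⟩
    by_contra hcon
    push_neg at hcon
    have h2 : (s - t0) * v0 - p s ≤ (t0 - t0) * v0 - p t0 :=
      (hmono t0 v0 hv0).monotone hcon
    have := (hpb t0).1
    nlinarith
  have hex : ∀ q : ℝ × ℝ, ∃ s : ℝ, vstar < q.2 → (q.1 < s ∧ (s - q.1) * q.2 = p s) := by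
    intro q
    by_cases h : vstar < q.2
    · obtain ⟨s, h1, h2⟩ := hroot q.1 q.2 h
      exact ⟨s, fun _ => ⟨h1, h2⟩⟩
    · exact ⟨0, fun h' => absurd h' h⟩
  choose tt htt using hex
  refine ⟨tt, ?_, ?_⟩
  · -- C¹ regularity
    intro q hq
    have hq2 : vstar < q.2 := (Set.mem_prod.1 hq).2
    apply ContDiffAt.contDiffWithinAt
    obtain ⟨hlt, heqn⟩ := htt q hq2
    set s := tt q with hsdef
    have hcpos : 0 < q.2 - deriv p s := by
      have := hbd s; linarith
    have hc : q.2 - deriv p s ≠ 0 := hcpos.ne'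
    set A := shearCLE (q.2 - deriv p s) (-q.2) (s - q.1) hc with hA
    set Φ : ℝ × ℝ × ℝ → ℝ × ℝ × ℝ :=
      fun y => ((y.1 - y.2.1) * y.2.2 - p y.1, y.2) with hΦdef
    have hΦq : Φ (s, q) = (0, q) := by
      simp only [hΦdef]
      exact Prod.ext (by rw [heqn, sub_self]) rfl
    have hΦcd : ContDiffAt ℝ 1 Φ (s, q) := by
      apply ContDiff.contDiffAt
      exact (((contDiff_fst.sub (contDiff_fst.comp contDiff_snd)).mul
        (contDiff_snd.comp contDiff_snd)).sub
        ((hp.of_le (by norm_num)).comp contDiff_fst)).prodMk contDiff_snd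
    have hΦd : HasFDerivAt Φ (A : ℝ × ℝ × ℝ →L[ℝ] ℝ × ℝ × ℝ) (s, q) := by
      have hu : HasFDerivAt (fun y : ℝ × ℝ × ℝ => y.1)
          (ContinuousLinearMap.fst ℝ ℝ (ℝ × ℝ)) (s, q) := hasFDerivAt_fst
      have hv2 : HasFDerivAt (fun y : ℝ × ℝ × ℝ => y.2.1)
          ((ContinuousLinearMap.fst ℝ ℝ ℝ).comp (ContinuousLinearMap.snd ℝ ℝ (ℝ × ℝ)))
          (s, q) := hasFDerivAt_fst.comp _ hasFDerivAt_snd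
      have hw : HasFDerivAt (fun y : ℝ × ℝ × ℝ => y.2.2)
          ((ContinuousLinearMap.snd ℝ ℝ ℝ).comp (ContinuousLinearMap.snd ℝ ℝ (ℝ × ℝ)))
          (s, q) := hasFDerivAt_snd.comp _ hasFDerivAt_snd
      have hpd : HasFDerivAt (fun y : ℝ × ℝ × ℝ => p y.1)
          (((1 : ℝ →L[ℝ] ℝ).smulRight (deriv p s)).comp
            (ContinuousLinearMap.fst ℝ ℝ (ℝ × ℝ))) (s, q) :=
        ((hd s).hasDerivAt.hasFDerivAt).comp ((s, q) : ℝ × ℝ × ℝ) hasFDerivAt_fst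
      have hD := (((hu.sub hv2).mul hw).sub hpd).prodMk hasFDerivAt_snd
      refine hD.congr_fderiv ?_
      symm
      apply ContinuousLinearMap.ext
      intro x
      show ((q.2 - deriv p s) * x.1 + (-q.2) * x.2.1 + (s - q.1) * x.2.2,
        x.2.1, x.2.2) = _
      refine Prod.ext ?_ rfl
      simp
      ring
    have hS : HasStrictFDerivAt Φ (A : ℝ × ℝ × ℝ →L[ℝ] ℝ × ℝ × ℝ) (s, q) :=
      hΦcd.hasStrictFDerivAt' hΦd one_ne_zero
    set Ψ : ℝ × ℝ × ℝ → ℝ × ℝ × ℝ := hS.localInverse Φ A (s, q) with hΨ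
    have hΨcd : ContDiffAt ℝ 1 Ψ (0, q) := by
      have h := hΦcd.to_localInverse (f' := A) hΦd one_ne_zero
      rw [hΦq] at h
      exact h
    have hev1 : ∀ᶠ y in nhds ((0 : ℝ), q), Φ (Ψ y) = y := by
      have h := hS.eventually_right_inverse
      rwa [hΦq] at h
    have hev2 : ∀ᶠ r in nhds q, Φ (Ψ (0, r)) = ((0 : ℝ), r) :=
      (Continuous.tendsto (continuous_const.prodMk continuous_id) q).eventually hev1
    have hev3 : ∀ᶠ r in nhds q, vstar < r.2 :=
      (isOpen_lt continuous_const continuous_snd).eventually_mem hq2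
    have heq : (fun r : ℝ × ℝ => (Ψ (0, r)).1) =ᶠ[nhds q] tt := by
      filter_upwards [hev2, hev3] with r h1 h2
      have h21 : (Ψ (0, r)).2 = r := congrArg Prod.snd h1
      have h0 : ((Ψ (0, r)).1 - (Ψ (0, r)).2.1) * (Ψ (0, r)).2.2 - p ((Ψ (0, r)).1) = 0 :=
        congrArg Prod.fst h1
      rw [h21] at h0
      exact huniq r.1 r.2 h2 _ _ (by linarith) (htt r h2).2
    have hmodel : ContDiffAt ℝ 1 (fun r : ℝ × ℝ => (Ψ (0, r)).1) q := by
      have hinner : ContDiffAt ℝ 1 (fun r : ℝ × ℝ => (((0 : ℝ), r) : ℝ × ℝ × ℝ)) q :=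
        contDiffAt_const.prodMk contDiffAt_id
      exact contDiffAt_fst.comp q (hΨcd.comp q hinner)
    exact hmodel.congr_of_eventuallyEq heq.symm
  · intro t0 v0 h
    obtain ⟨h1, h2⟩ := htt (t0, v0) h
    refine ⟨⟨h1, h2⟩, fun s hs hseq => huniq t0 v0 h s _ hseq h2, ?_⟩
    have := hbd (tt (t0, v0))
    linarith
end

section
/- (Non-injectivity of the ping-pong map) Suppose p ∈ C²(ℝ) is bounded with bounded derivatives, 0 < a ≤ p ≤ b, and there exist t̃_1 < t̃_2 at which ṗ attains its supremum, with p(t̃_1) > p(t̃_2). Then the ping-pong map (t_0, v_0) ↦ (t_1, v_1) defined by t_1 = t̃ + p(t̃)/v_1, v_1 = v_0 − 2ṗ(t̃), with t̃ the solution of (t̃ − t_0)v_0 = p(t̃), fails to be injective on its domain ℝ × (v*, ∞): there exist t_{0,1} < t_{0,2} and v_0 > v* with identical images. -/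
/-- Non-injectivity of the ping-pong map: if `ṗ` attains its supremum at two
times `t̃₁ < t̃₂` with `p(t̃₁) > p(t̃₂)`, then the ping-pong map is not injective
on `ℝ × (v*, ∞)`: two distinct initial conditions have identical images. -/
theorem stmt_16 (p : ℝ → ℝ) (hp : ContDiff ℝ 2 p)
    (a b : ℝ) (ha : 0 < a) (hpb : ∀ t : ℝ, a ≤ p t ∧ p t ≤ b)
    (M : ℝ) (hM : ∀ t : ℝ, |deriv p t| ≤ M ∧ |deriv (deriv p) t| ≤ M)
    (vstar : ℝ) (hv : vstar = 2 * max (⨆ t : ℝ, deriv p t) 0)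
    (tt1 tt2 : ℝ) (h12 : tt1 < tt2)
    (hmax1 : deriv p tt1 = ⨆ t : ℝ, deriv p t)
    (hmax2 : deriv p tt2 = ⨆ t : ℝ, deriv p t)
    (hpp : p tt2 < p tt1) :
    ∃ t01 t02 v0 s1 s2 : ℝ, t01 < t02 ∧ vstar < v0 ∧
      t01 < s1 ∧ (s1 - t01) * v0 = p s1 ∧
      t02 < s2 ∧ (s2 - t02) * v0 = p s2 ∧
      v0 - 2 * deriv p s1 = v0 - 2 * deriv p s2 ∧
      s1 + p s1 / (v0 - 2 * deriv p s1) = s2 + p s2 / (v0 - 2 * deriv p s2) := by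
  have hdiff : Differentiable ℝ p := hp.differentiable (by norm_num)
  set S : ℝ := ⨆ t : ℝ, deriv p t with hS
  have hbdd : BddAbove (Set.range (deriv p)) := by
    refine ⟨M, ?_⟩
    rintro x ⟨t, rfl⟩
    exact (abs_le.1 (hM t).1).2
  have hle : ∀ t : ℝ, deriv p t ≤ S := fun t => le_ciSup hbdd t
  have hab : a < b := lt_of_le_of_lt (hpb tt2).1 (lt_of_lt_of_le hpp (hpb tt1).2)
  -- S ≥ 0
  have hS0 : 0 ≤ S := by
    by_contra hneg
    push_neg at hneg
    have hSne : S ≠ 0 := ne_of_lt hneg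
    have hdivpos : 0 < (a - b) / S := div_pos_of_neg_of_neg (by linarith) hneg
    have hT0 : (0:ℝ) < (a - b) / S + 1 := by linarith
    obtain ⟨c, _, hc⟩ := exists_deriv_eq_slope p hT0
      (hdiff.continuous.continuousOn) (hdiff.differentiableOn)
    set T : ℝ := (a - b) / S + 1 with hT
    have hcS : deriv p c ≤ S := hle c
    rw [sub_zero] at hc
    have hslope : (p T - p 0) / T ≤ S := hc ▸ hcS
    have h1 : p T - p 0 ≤ S * T := by
      rw [div_le_iff₀ hT0] at hslope; linarith [hslope]
    have hST : S * T = a - b + S := by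
      rw [hT]; field_simp
    have := (hpb T).1
    have := (hpb 0).2
    nlinarith
  have h21 : 0 < tt2 - tt1 := by linarith
  set v1 : ℝ := (p tt1 - p tt2) / (tt2 - tt1) with hv1def
  have hv1 : 0 < v1 := div_pos (by linarith) h21
  set v0 : ℝ := v1 + 2 * S with hv0def
  have hv0 : 0 < v0 := by linarith
  have hd1 : deriv p tt1 = S := hmax1
  have hd2 : deriv p tt2 = S := hmax2
  refine ⟨tt1 - p tt1 / v0, tt2 - p tt2 / v0, v0, tt1, tt2, ?_, ?_, ?_, ?_, ?_, ?_, ?_, ?_⟩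
  · have h1 : 0 < (p tt1 - p tt2) / v0 := div_pos (by linarith) hv0
    linarith [h1, h21, sub_div (p tt1) (p tt2) v0]
  · rw [hv]
    rw [max_eq_left hS0]
    linarith
  · have : 0 < p tt1 / v0 := div_pos (by linarith [(hpb tt1).1]) hv0
    linarith
  · field_simp
    ring
  · have : 0 < p tt2 / v0 := div_pos (by linarith [(hpb tt2).1]) hv0
    linarith
  · field_simp
    ring
  · rw [hd1, hd2]
  · rw [hd1, hd2]
    have hw : v0 - 2 * S = v1 := by ring
    rw [hw]
    have hkey : p tt1 - p tt2 = v1 * (tt2 - tt1) := by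
      rw [hv1def]; field_simp
    field_simp
    nlinarith [hkey]
end

section
/- (Solvability of the flow-impact equation) Let Ω, ψ be as above and P ∈ C¹_ψ(Ω) with a ≤ P ≤ b, and let v* = 2·max{max_Ω ∂_ψ P, 0}. Then for every (ω_0, E_0) ∈ Ω × (v*²/2, ∞) the equation τ = (2E_0)^{−1/2} · P(ω_0 + ψ(τ)) has a unique solution τ = τ(ω_0, E_0) > 0, and τ is continuous on Ω × (v*²/2, ∞). -/
/-- Solvability of the flow-impact equation: for `E₀ > v*²/2` the equation
`τ = (2E₀)^{-1/2}·P(ω₀ + ψ τ)` has a unique solution `τ(ω₀,E₀) > 0`,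
continuous on `Ω × (v*²/2, ∞)`. -/
theorem stmt_18 {Ω : Type*} [AddCommGroup Ω] [TopologicalSpace Ω] [IsTopologicalAddGroup Ω]
    [CompactSpace Ω] [TopologicalSpace.MetrizableSpace Ω]
    (ψ : ℝ →+ Ω) (hψ : Continuous ψ) (hd : DenseRange ψ)
    (P Pψ : Ω → ℝ) (hP : Continuous P) (hPψc : Continuous Pψ)
    (hPψ : ∀ ω : Ω, HasDerivAt (fun t : ℝ => P (ω + ψ t)) (Pψ ω) 0)
    (a b : ℝ) (ha : 0 < a) (hPb : ∀ ω : Ω, a ≤ P ω ∧ P ω ≤ b)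
    (vstar : ℝ) (hv : vstar = 2 * max (⨆ ω : Ω, Pψ ω) 0) :
    ∃ τ : Ω × ℝ → ℝ,
      ContinuousOn τ (Set.univ ×ˢ Set.Ioi (vstar ^ 2 / 2)) ∧
      ∀ (ω0 : Ω) (E0 : ℝ), vstar ^ 2 / 2 < E0 →
        0 < τ (ω0, E0) ∧
        τ (ω0, E0) = (Real.sqrt (2 * E0))⁻¹ * P (ω0 + ψ (τ (ω0, E0))) ∧
        ∀ t : ℝ, t = (Real.sqrt (2 * E0))⁻¹ * P (ω0 + ψ t) → t = τ (ω0, E0) := by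
  classical
  set M : ℝ := max (⨆ ω : Ω, Pψ ω) 0 with hMdef
  have hM0 : 0 ≤ M := le_max_right _ _
  have hvM : vstar = 2 * M := hv
  have hv0 : 0 ≤ vstar := by rw [hvM]; linarith
  have hPψle : ∀ ω : Ω, Pψ ω ≤ M := fun ω =>
    le_trans (le_ciSup (isCompact_range hPψc).bddAbove ω) (le_max_left _ _)
  -- derivative at an arbitrary point
  have hderiv : ∀ (ω : Ω) (s : ℝ),
      HasDerivAt (fun t : ℝ => P (ω + ψ t)) (Pψ (ω + ψ s)) s := by
    intro ω s
    have h2 : HasDerivAt (fun t : ℝ => t - s) 1 s := (hasDerivAt_id s).sub_const s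
    have h1 : HasDerivAt (fun u : ℝ => P (ω + ψ s + ψ u)) (Pψ (ω + ψ s)) (s - s) := by
      rw [sub_self]; exact hPψ (ω + ψ s)
    have h3 := HasDerivAt.comp (h := fun t : ℝ => t - s) s h1 h2
    have heq : ((fun u : ℝ => P (ω + ψ s + ψ u)) ∘ (fun t : ℝ => t - s))
        = fun t : ℝ => P (ω + ψ t) := by
      funext t
      have hst : s + (t - s) = t := by ring
      simp only [Function.comp]
      rw [add_assoc, ← map_add, hst]
    rw [heq] at h3
    simpa using h3
  -- estimates on the constant
  have hc : ∀ E : ℝ, vstar ^ 2 / 2 < E →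
      0 < Real.sqrt (2 * E) ∧ (Real.sqrt (2 * E))⁻¹ * M < 1 / 2 := by
    intro E hE
    have hE0 : 0 < E := lt_of_le_of_lt (by positivity) hE
    have hs : 0 < Real.sqrt (2 * E) := Real.sqrt_pos.2 (by linarith)
    refine ⟨hs, ?_⟩
    have h1 : vstar < Real.sqrt (2 * E) := by
      have := Real.sqrt_lt_sqrt (sq_nonneg vstar) (by linarith : vstar ^ 2 < 2 * E)
      rwa [Real.sqrt_sq hv0] at this
    have h2M : 2 * M < Real.sqrt (2 * E) := by rw [← hvM]; exact h1
    have h2 : (Real.sqrt (2 * E))⁻¹ * (2 * M)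
        < (Real.sqrt (2 * E))⁻¹ * Real.sqrt (2 * E) :=
      mul_lt_mul_of_pos_left h2M (inv_pos.2 hs)
    rw [inv_mul_cancel₀ hs.ne'] at h2
    linarith
  -- strict monotonicity of the defect function
  have hmono : ∀ (ω : Ω) (E : ℝ), vstar ^ 2 / 2 < E →
      StrictMono (fun t : ℝ => t - (Real.sqrt (2 * E))⁻¹ * P (ω + ψ t)) := by
    intro ω E hE
    obtain ⟨hs, hcM⟩ := hc E hE
    have hcpos : 0 < (Real.sqrt (2 * E))⁻¹ := inv_pos.2 hs
    refine strictMono_of_hasDerivAt_pos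
      (f' := fun s => 1 - (Real.sqrt (2 * E))⁻¹ * Pψ (ω + ψ s))
      (fun s => (hasDerivAt_id s).sub ((hderiv ω s).const_mul _)) (fun s => ?_)
    have h1 := hPψle (ω + ψ s)
    have h2 : (Real.sqrt (2 * E))⁻¹ * Pψ (ω + ψ s) ≤ (Real.sqrt (2 * E))⁻¹ * M :=
      mul_le_mul_of_nonneg_left h1 hcpos.le
    linarith
  -- existence and uniqueness of the solution
  have key : ∀ (ω0 : Ω) (E0 : ℝ), vstar ^ 2 / 2 < E0 →
      ∃ t : ℝ, 0 < t ∧ t = (Real.sqrt (2 * E0))⁻¹ * P (ω0 + ψ t) ∧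
        ∀ t' : ℝ, t' = (Real.sqrt (2 * E0))⁻¹ * P (ω0 + ψ t') → t' = t := by
    intro ω0 E0 hE
    obtain ⟨hs, -⟩ := hc E0 hE
    set c : ℝ := (Real.sqrt (2 * E0))⁻¹ with hcdef
    have hcpos : 0 < c := inv_pos.2 hs
    set g : ℝ → ℝ := fun t => t - c * P (ω0 + ψ t) with hgdef
    have hmg : StrictMono g := hmono ω0 E0 hE
    have hgc : Continuous g :=
      continuous_id.sub (continuous_const.mul (hP.comp (continuous_const.add hψ)))
    have hb0 : 0 < b := lt_of_lt_of_le ha (le_trans (hPb ω0).1 (hPb ω0).2)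
    have hg0 : g 0 < 0 := by
      have := (hPb (ω0 + ψ 0)).1
      have : c * a ≤ c * P (ω0 + ψ 0) := mul_le_mul_of_nonneg_left this hcpos.le
      have hca : 0 < c * a := mul_pos hcpos ha
      simp only [hgdef]
      linarith
    have hgcb : 0 ≤ g (c * b) := by
      have := (hPb (ω0 + ψ (c * b))).2
      have : c * P (ω0 + ψ (c * b)) ≤ c * b := mul_le_mul_of_nonneg_left this hcpos.le
      simp only [hgdef]
      linarith
    have h0cb : (0 : ℝ) ≤ c * b := le_of_lt (mul_pos hcpos hb0)
    have hIVT := intermediate_value_Icc h0cb hgc.continuousOn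
    have h0mem : (0 : ℝ) ∈ Set.Icc (g 0) (g (c * b)) := ⟨hg0.le, hgcb⟩
    obtain ⟨t, -, hgt⟩ := hIVT h0mem
    refine ⟨t, ?_, ?_, ?_⟩
    · have : g 0 < g t := by rw [hgt]; exact hg0
      exact hmg.lt_iff_lt.mp this
    · have : t - c * P (ω0 + ψ t) = 0 := hgt
      linarith
    · intro t' ht'
      have hgt' : g t' = 0 := by
        simp only [hgdef]; linarith
      exact hmg.injective (by rw [hgt', hgt])
  -- define τ by choice
  set τ : Ω × ℝ → ℝ :=
    fun p => if h : vstar ^ 2 / 2 < p.2 then (key p.1 p.2 h).choose else 0 with hτdef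
  have hτspec : ∀ (ω0 : Ω) (E0 : ℝ) (h : vstar ^ 2 / 2 < E0),
      0 < τ (ω0, E0) ∧
      τ (ω0, E0) = (Real.sqrt (2 * E0))⁻¹ * P (ω0 + ψ (τ (ω0, E0))) ∧
      ∀ t' : ℝ, t' = (Real.sqrt (2 * E0))⁻¹ * P (ω0 + ψ t') → t' = τ (ω0, E0) := by
    intro ω0 E0 h
    have hτ : τ (ω0, E0) = (key ω0 E0 h).choose := by
      simp only [hτdef]; rw [dif_pos h]
    rw [hτ]
    exact (key ω0 E0 h).choose_spec
  refine ⟨τ, ?_, fun ω0 E0 h => hτspec ω0 E0 h⟩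
  -- continuity
  intro p hp
  obtain ⟨ω0, E0⟩ := p
  have hE : vstar ^ 2 / 2 < E0 := hp.2
  apply ContinuousAt.continuousWithinAt
  rw [ContinuousAt, Metric.tendsto_nhds]
  intro ε hε
  obtain ⟨ht0pos, ht0eq, -⟩ := hτspec ω0 E0 hE
  set t0 : ℝ := τ (ω0, E0) with ht0def
  obtain ⟨hs0, -⟩ := hc E0 hE
  have hmonop := hmono ω0 E0 hE
  have hgp0 : t0 - (Real.sqrt (2 * E0))⁻¹ * P (ω0 + ψ t0) = 0 := by linarith [ht0eq]
  -- the defect function in all variables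
  set F : ℝ → Ω × ℝ → ℝ :=
    fun t q => t - (Real.sqrt (2 * q.2))⁻¹ * P (q.1 + ψ t) with hFdef
  have hcont1 : ∀ t : ℝ, ContinuousAt (F t) (ω0, E0) := by
    intro t
    apply ContinuousAt.sub continuousAt_const
    apply ContinuousAt.mul
    · exact ((Real.continuous_sqrt.comp
        (continuous_const.mul continuous_snd)).continuousAt).inv₀ hs0.ne'
    · exact (hP.comp (continuous_fst.add continuous_const)).continuousAt
  have hBpos : 0 < F (t0 + ε) (ω0, E0) := by
    have := hmonop (show t0 < t0 + ε by linarith)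
    simp only [hFdef]
    dsimp only at this
    linarith
  have hCneg : F (t0 - ε) (ω0, E0) < 0 := by
    have := hmonop (show t0 - ε < t0 by linarith)
    simp only [hFdef]
    dsimp only at this
    linarith
  have hA : ∀ᶠ q : Ω × ℝ in nhds (ω0, E0), vstar ^ 2 / 2 < q.2 :=
    (isOpen_Ioi.preimage continuous_snd).mem_nhds hE
  have hB : ∀ᶠ q : Ω × ℝ in nhds (ω0, E0), 0 < F (t0 + ε) q :=
    hcont1 (t0 + ε) (Ioi_mem_nhds hBpos)
  have hC : ∀ᶠ q : Ω × ℝ in nhds (ω0, E0), F (t0 - ε) q < 0 :=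
    hcont1 (t0 - ε) (Iio_mem_nhds hCneg)
  filter_upwards [hA, hB, hC] with q hqA hqB hqC
  obtain ⟨ω1, E1⟩ := q
  obtain ⟨-, hqeq, -⟩ := hτspec ω1 E1 hqA
  have hmonoq := hmono ω1 E1 hqA
  have hFq0 : F (τ (ω1, E1)) (ω1, E1) = 0 := by
    simp only [hFdef]; linarith [hqeq]
  have hlt1 : τ (ω1, E1) < t0 + ε := by
    have : F (τ (ω1, E1)) (ω1, E1) < F (t0 + ε) (ω1, E1) := by
      rw [hFq0]; exact hqB
    exact hmonoq.lt_iff_lt.mp this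
  have hlt2 : t0 - ε < τ (ω1, E1) := by
    have : F (t0 - ε) (ω1, E1) < F (τ (ω1, E1)) (ω1, E1) := by
      rw [hFq0]; exact hqC
    exact hmonoq.lt_iff_lt.mp this
  rw [Real.dist_eq, abs_sub_lt_iff]
  constructor <;> linarith
end
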